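/- For Re(s) > 1, π^{-s}·Γ(s)·Σ_{(k,l)∈Z²∖{(0,0)}} (k²+l²)^{-s} = ∫_0^∞ u^{s-1}(θ(u)² - 1) du, where θ(u) = Σ_{n∈Z} e^{-πn²u}. -/

import Mathlib

open Complex MeasureTheory

/-- Jacobi theta function `θ(u) = Σ_{n∈ℤ} e^{-πn²u}` for real `u`. -/
noncomputable def theta (u : ℝ) : ℝ :=
  ∑' n : ℤ, Real.exp (-Real.pi * (n : ℝ) ^ 2 * u)

open Real in
lemma summable_theta_term {t : ℝ} (ht : 0 < t) :
    Summable fun n : ℤ ↦ Real.exp (-π * (n : ℝ) ^ 2 * t) := by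
  have hnat : Summable fun n : ℕ ↦ Real.exp (-π * (n : ℝ) ^ 2 * t) := by
    refine Summable.of_nonneg_of_le (fun n ↦ (Real.exp_pos _).le) (fun n ↦ ?_)
      (summable_geometric_of_lt_one (Real.exp_pos (-π * t)).le ?_)
    · rw [← Real.exp_nat_mul]
      apply Real.exp_le_exp.mpr
      have hπ := Real.pi_pos
      have hn : (n : ℝ) ≤ (n : ℝ) ^ 2 := by
        rcases Nat.eq_zero_or_pos n with h | h
        · simp [h]
        · have h1 : (1 : ℝ) ≤ (n : ℝ) := by exact_mod_cast h
          nlinarith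
      nlinarith [mul_le_mul_of_nonneg_right hn (mul_pos hπ ht).le]
    · rw [Real.exp_lt_one_iff]
      nlinarith [Real.pi_pos]
  refine Summable.of_nat_of_neg hnat (hnat.congr fun n ↦ ?_)
  push_cast
  ring_nf

open Real in
lemma hasSum_theta {t : ℝ} (ht : 0 < t) :
    HasSum (fun n : ℤ ↦ Real.exp (-π * (n : ℝ) ^ 2 * t)) (theta t) :=
  (summable_theta_term ht).hasSum

open Real EisensteinSeries in
lemma summable_epstein {r : ℝ} (hr : 1 < r) :
    Summable fun p : ℤ × ℤ ↦ 1 / ((p.1 ^ 2 + p.2 ^ 2 : ℝ)) ^ r := by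
  have hr0 : (0 : ℝ) < r := lt_trans zero_lt_one hr
  have h2r : (2 : ℝ) < 2 * r := by linarith
  have h := summable_one_div_norm_rpow h2r
  rw [← (finTwoArrowEquiv ℤ).summable_iff]
  simp only [Function.comp_def, finTwoArrowEquiv_apply]
  refine Summable.of_nonneg_of_le (fun x ↦ by positivity) (fun x ↦ ?_) h
  rcases eq_or_ne x 0 with hx | hx
  · subst hx
    simp [Real.zero_rpow hr0.ne', Real.zero_rpow (by linarith : -(2 * r) ≠ 0)]
  · have hx1 : (1 : ℝ) ≤ ‖x‖ := by
      rw [norm_eq_max_natAbs]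
      have h01 : x 0 ≠ 0 ∨ x 1 ≠ 0 := by
        by_contra hc
        push_neg at hc
        exact hx (funext (Fin.forall_fin_two.mpr ⟨hc.1, hc.2⟩))
      have : 1 ≤ max (x 0).natAbs (x 1).natAbs := by
        rcases h01 with h0 | h0
        · exact le_max_of_le_left (Nat.one_le_iff_ne_zero.mpr (Int.natAbs_ne_zero.mpr h0))
        · exact le_max_of_le_right (Nat.one_le_iff_ne_zero.mpr (Int.natAbs_ne_zero.mpr h0))
      exact_mod_cast this
    have hx0 : (0 : ℝ) < ‖x‖ := lt_of_lt_of_le zero_lt_one hx1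
    have h0 : ((x 0).natAbs : ℝ) ^ 2 = (x 0 : ℝ) ^ 2 := by
      push_cast [Nat.cast_natAbs]; exact _root_.sq_abs _
    have h1 : ((x 1).natAbs : ℝ) ^ 2 = (x 1 : ℝ) ^ 2 := by
      push_cast [Nat.cast_natAbs]; exact _root_.sq_abs _
    have hsq : ‖x‖ ^ (2 : ℝ) ≤ ((x 0 : ℝ) ^ 2 + (x 1 : ℝ) ^ 2) := by
      rw [Real.rpow_two, norm_eq_max_natAbs]
      push_cast
      rcases max_cases ((x 0).natAbs : ℝ) ((x 1).natAbs : ℝ) with ⟨hm, _⟩ | ⟨hm, _⟩ <;>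
        rw [hm] <;> nlinarith [sq_nonneg (x 0 : ℝ), sq_nonneg (x 1 : ℝ)]
    have key : ‖x‖ ^ (2 * r) ≤ ((x 0 : ℝ) ^ 2 + (x 1 : ℝ) ^ 2) ^ r := by
      rw [Real.rpow_mul hx0.le]
      exact Real.rpow_le_rpow (Real.rpow_nonneg hx0.le _) hsq hr0.le
    rw [Real.rpow_neg hx0.le, ← one_div]
    exact one_div_le_one_div_of_le (Real.rpow_pos_of_pos hx0 _) key

set_option maxHeartbeats 1000000 in
theorem epstein_mellin_representation (s : ℂ) (hs : 1 < s.re) :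
    (Real.pi : ℂ) ^ (-s) * Complex.Gamma s *
        (∑' p : ℤ × ℤ, if p ≠ 0 then ((p.1 ^ 2 + p.2 ^ 2 : ℤ) : ℂ) ^ (-s) else 0)
      = ∫ u in Set.Ioi (0 : ℝ), (u : ℂ) ^ (s - 1) * ((theta u : ℂ) ^ 2 - 1) := by
  have hs0 : 0 < s.re := lt_trans zero_lt_one hs
  have hsne : s ≠ 0 := fun h ↦ by simp [h] at hs0
  -- the key HasSum statement
  have key := hasSum_mellin_pi_mul₀ (ι := ℤ × ℤ)
    (a := fun _ ↦ (1 : ℂ)) (p := fun p ↦ ((p.1 : ℝ) ^ 2 + (p.2 : ℝ) ^ 2))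
    (F := fun t ↦ ((theta t : ℂ) ^ 2 - 1)) (s := s)
    (fun p ↦ by positivity) hs0 ?_ ?_
  · -- conclude from key
    have hmel : mellin (fun t ↦ ((theta t : ℂ) ^ 2 - 1)) s
        = ∫ u in Set.Ioi (0 : ℝ), (u : ℂ) ^ (s - 1) * ((theta u : ℂ) ^ 2 - 1) := by
      simp only [mellin, smul_eq_mul]
    rw [← hmel, ← key.tsum_eq, ← tsum_mul_left]
    refine tsum_congr fun p ↦ ?_
    rcases eq_or_ne p 0 with hp | hp
    · subst hp
      simp [zero_cpow hsne]
    · have hY : ((p.1 ^ 2 + p.2 ^ 2 : ℤ) : ℂ) = (((p.1 : ℝ) ^ 2 + (p.2 : ℝ) ^ 2 : ℝ) : ℂ) := by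
        push_cast; ring
      rw [if_pos hp, hY, mul_one, div_eq_mul_inv]
      simp only [Complex.cpow_neg]
  · -- the HasSum hypothesis
    intro t ht
    rw [Set.mem_Ioi] at ht
    have h1 := hasSum_theta ht
    have hsq : HasSum (fun p : ℤ × ℤ ↦
        Real.exp (-Real.pi * (p.1 : ℝ) ^ 2 * t) * Real.exp (-Real.pi * (p.2 : ℝ) ^ 2 * t))
        (theta t * theta t) :=
      h1.mul h1 ((summable_theta_term ht).mul_of_nonneg (summable_theta_term ht)
        (fun n ↦ (Real.exp_pos _).le) (fun n ↦ (Real.exp_pos _).le))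
    have hsq' : HasSum (fun p : ℤ × ℤ ↦
        Real.exp (-Real.pi * ((p.1 : ℝ) ^ 2 + (p.2 : ℝ) ^ 2) * t)) (theta t ^ 2) := by
      rw [sq]
      refine HasSum.congr_fun hsq fun p ↦ ?_
      rw [← Real.exp_add]
      ring_nf
    have hsub := hsq'.sub (hasSum_ite_eq (0 : ℤ × ℤ) (1 : ℝ))
    have hfinal : HasSum (fun p : ℤ × ℤ ↦
        if ((p.1 : ℝ) ^ 2 + (p.2 : ℝ) ^ 2) = 0 then 0
        else Real.exp (-Real.pi * ((p.1 : ℝ) ^ 2 + (p.2 : ℝ) ^ 2) * t))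
        (theta t ^ 2 - 1) := by
      refine HasSum.congr_fun hsub fun p ↦ ?_
      rcases eq_or_ne p 0 with hp | hp
      · subst hp; simp
      · have hpne : ((p.1 : ℝ) ^ 2 + (p.2 : ℝ) ^ 2) ≠ 0 := by
          have h01 : p.1 ≠ 0 ∨ p.2 ≠ 0 := by
            by_contra hc; push_neg at hc; exact hp (Prod.ext hc.1 hc.2)
          rcases h01 with h0 | h0 <;> positivity
        simp [hp, hpne]
    -- push to ℂ
    have hC := Complex.hasSum_ofReal.mpr hfinal
    simp only [apply_ite Complex.ofReal, Complex.ofReal_zero, Complex.ofReal_sub,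
      Complex.ofReal_pow, Complex.ofReal_one] at hC
    refine HasSum.congr_fun hC fun p ↦ ?_
    split_ifs with h <;> simp
  · -- summability
    refine (summable_epstein hs).congr fun p ↦ ?_
    simp
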